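/- Let N ≥ 1 be an integer, ρ > 0, R ≥ 1, let U₁, …, U_N : ℝ → ℝ be C¹ functions with z·U_i'(z) ≥ ρ|z| whenever |z| ≥ R, and let W : ℝ^N → ℝ be C¹ with |∂_{x_j} W(x)| ≤ ρ/4 for all j and all x ∈ ℝ^N. Set U(x) = W(x) + Σ_{j=1}^N U_j(x_j). Define φ : ℝ → [0,1] by φ(s) = 1 for s ≥ 1, φ(s) = 0 for s ≤ −1, φ(s) = (1+sin(πs/2))/2 for s ∈ [−1,1]; define h : ℝ → ℝ by h(s) = |s| for |s| ≥ 1 and h(s) = (s²+1)/2 for |s| ≤ 1; and set V_i(z,w) = e^{(ρ/4) h(z)} (1 + φ(zw)) for z ∈ ℝ, w ∈ {−1,1}. Then for all x ∈ ℝ^N, y ∈ {−1,1}^N and all i with |x_i| ≥ R, y_i · (d/dz)[V_i(·, y_i)](x_i) + (y_i ∂_{x_i} U(x))₊ · (V_i(x_i, −y_i) − V_i(x_i, y_i)) ≤ −(ρ/8) V_i(x_i, y_i), where (·)₊ denotes the positive part. -/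

import Mathlib

/-- The interpolation function `φ`: `φ s = 1` for `s ≥ 1`, `φ s = 0` for `s ≤ -1`, and
`φ s = (1 + sin(πs/2))/2` for `s ∈ [-1,1]`. -/
noncomputable def phi (s : ℝ) : ℝ :=
  if 1 ≤ s then 1 else if s ≤ -1 then 0 else (1 + Real.sin (Real.pi * s / 2)) / 2

/-- The smoothed absolute value `h`: `h s = |s|` for `|s| ≥ 1` and `h s = (s²+1)/2` for
`|s| ≤ 1`. -/
noncomputable def hfun (s : ℝ) : ℝ :=
  if 1 ≤ |s| then |s| else (s ^ 2 + 1) / 2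

/-- The per-coordinate Lyapunov function `V_i(z,w) = e^{(ρ/4) h(z)} (1 + φ(zw))` for the
Zig-Zag process. -/
noncomputable def Vzz (ρ z w : ℝ) : ℝ :=
  Real.exp (ρ / 4 * hfun z) * (1 + phi (z * w))

lemma phi_of_one_le {s : ℝ} (h : 1 ≤ s) : phi s = 1 := by simp [phi, h]

lemma phi_of_le_neg {s : ℝ} (h : s ≤ -1) : phi s = 0 := by
  have : ¬ (1 : ℝ) ≤ s := by linarith
  simp [phi, this, h]

lemma phi_neg (s : ℝ) : phi (-s) = 1 - phi s := by
  unfold phi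
  rcases le_or_gt 1 s with h | h
  · have h1 : ¬ (1:ℝ) ≤ -s := by linarith
    have h2 : -s ≤ -1 := by linarith
    simp [h, h1, h2]
  rcases le_or_gt s (-1) with h' | h'
  · have h1 : (1:ℝ) ≤ -s := by linarith
    have h2 : ¬ (1:ℝ) ≤ s := by linarith
    simp [h1, h2, h']
  · have h1 : ¬ (1:ℝ) ≤ -s := by linarith
    have h2 : ¬ (-s ≤ -1) := by linarith
    have h3 : ¬ (1:ℝ) ≤ s := by linarith
    have h4 : ¬ (s ≤ -1) := by linarith
    simp only [h1, h2, h3, h4, if_false, if_neg, ite_false]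
    rw [show Real.pi * -s / 2 = -(Real.pi * s / 2) by ring, Real.sin_neg]
    ring

lemma hfun_neg (s : ℝ) : hfun (-s) = hfun s := by simp [hfun, abs_neg, neg_pow]

lemma hfun_of_one_le {s : ℝ} (h : 1 ≤ s) : hfun s = s := by
  have h1 : |s| = s := abs_of_pos (by linarith)
  simp [hfun, h1, h]

lemma sq_isLittleO : (fun s : ℝ => (s - 1) ^ 2) =o[nhds 1] (fun s => s - 1) := by
  rw [Asymptotics.isLittleO_iff]
  intro c hc
  filter_upwards [Metric.ball_mem_nhds (1:ℝ) hc] with s hs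
  rw [Metric.mem_ball, Real.dist_eq] at hs
  have h1 : ‖(s - 1) ^ 2‖ = |s - 1| * |s - 1| := by
    rw [Real.norm_eq_abs, sq, abs_mul]
  rw [h1, Real.norm_eq_abs]
  exact mul_le_mul_of_nonneg_right hs.le (abs_nonneg _)

lemma hasDerivAt_hfun {z : ℝ} (hz : 1 ≤ z) : HasDerivAt hfun 1 z := by
  rcases hz.lt_or_eq with h | h
  · have hev : hfun =ᶠ[nhds z] id := by
      filter_upwards [Ioi_mem_nhds h] with s hs
      exact hfun_of_one_le hs.le
    exact (hasDerivAt_id z).congr_of_eventuallyEq hev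
  · subst h
    rw [hasDerivAt_iff_isLittleO]
    refine Asymptotics.IsBigO.trans_isLittleO ?_ sq_isLittleO
    rw [Asymptotics.isBigO_iff]
    refine ⟨1, ?_⟩
    filter_upwards [Ioi_mem_nhds (show (0:ℝ) < 1 by norm_num)] with s hs
    have hs' : (0:ℝ) < s := hs
    have h0 : hfun 1 = 1 := hfun_of_one_le le_rfl
    simp only [Real.norm_eq_abs, smul_eq_mul, mul_one, one_mul]
    rcases le_or_gt 1 s with h1 | h1
    · rw [hfun_of_one_le h1, h0]
      rw [show s - 1 - (s - 1) = 0 by ring, abs_zero, abs_of_nonneg (sq_nonneg _)]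
      positivity
    · have habs : |s| = s := abs_of_pos hs'
      have h2 : hfun s = (s ^ 2 + 1) / 2 := by
        rw [hfun, if_neg]; rw [habs]; linarith
      rw [h2, h0]
      rw [abs_of_nonneg (by nlinarith), abs_of_nonneg (sq_nonneg _)]
      nlinarith

lemma hasDerivAt_phi_pos {z : ℝ} (hz : 1 ≤ z) : HasDerivAt phi 0 z := by
  rcases hz.lt_or_eq with h | h
  · have hev : phi =ᶠ[nhds z] (fun _ => 1) := by
      filter_upwards [Ioi_mem_nhds h] with s hs
      exact phi_of_one_le hs.le
    exact (hasDerivAt_const z 1).congr_of_eventuallyEq hev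
  · subst h
    rw [hasDerivAt_iff_isLittleO]
    refine Asymptotics.IsBigO.trans_isLittleO ?_ sq_isLittleO
    rw [Asymptotics.isBigO_iff]
    refine ⟨1, ?_⟩
    filter_upwards [Ioi_mem_nhds (show (0:ℝ) < 1 by norm_num)] with s hs
    have hs' : (0:ℝ) < s := hs
    have h0 : phi 1 = 1 := phi_of_one_le le_rfl
    simp only [Real.norm_eq_abs, smul_eq_mul, mul_zero, sub_zero]
    rcases le_or_gt 1 s with h1 | h1
    · rw [phi_of_one_le h1, h0]
      rw [show (1:ℝ) - 1 = 0 by ring, abs_zero, abs_of_nonneg (sq_nonneg _)]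
      positivity
    · have h2 : phi s = (1 + Real.sin (Real.pi * s / 2)) / 2 := by
        rw [phi, if_neg (by linarith), if_neg (by linarith)]
      rw [h2, h0]
      have hsin : Real.sin (Real.pi * s / 2) = Real.cos (Real.pi * (1 - s) / 2) := by
        rw [show Real.pi * (1 - s) / 2 = Real.pi / 2 - Real.pi * s / 2 by ring,
          Real.cos_pi_div_two_sub]
      have hcos := Real.one_sub_sq_div_two_le_cos (x := Real.pi * (1 - s) / 2)
      have hsle : Real.sin (Real.pi * s / 2) ≤ 1 := Real.sin_le_one _
      have hpi : Real.pi ≤ 4 := Real.pi_le_four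
      have hpi0 : 0 < Real.pi := Real.pi_pos
      rw [hsin] at hsle ⊢
      rw [abs_of_nonpos (by nlinarith), abs_of_nonneg (sq_nonneg _)]
      nlinarith [hcos, sq_nonneg (s - 1),
        mul_nonneg (mul_nonneg (sub_nonneg.mpr hpi) (by linarith : (0:ℝ) ≤ 4 + Real.pi))
          (sq_nonneg (s - 1))]

lemma hasDerivAt_phi_neg {z : ℝ} (hz : z ≤ -1) : HasDerivAt phi 0 z := by
  have h1 : HasDerivAt (fun t : ℝ => -t) (-1) z := (hasDerivAt_neg z)
  have h2 : HasDerivAt phi 0 (-z) := hasDerivAt_phi_pos (by linarith)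
  have h3 := (hasDerivAt_const z (1:ℝ)).fun_sub (HasDerivAt.comp z h2 h1)
  have he : (fun t : ℝ => 1 - (phi ∘ Neg.neg) t) = phi := by
    funext t; simp only [Function.comp, phi_neg]; ring
  rw [he] at h3
  exact h3.congr_deriv (by ring)

lemma Vzz_neg (ρ s w : ℝ) : Vzz ρ (-s) (-w) = Vzz ρ s w := by
  unfold Vzz; rw [hfun_neg, neg_mul_neg]

lemma hasDerivAt_Vzz_pos (ρ : ℝ) {w : ℝ} (hw : w = 1 ∨ w = -1) {z : ℝ} (hz : 1 ≤ z) :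
    HasDerivAt (fun s => Vzz ρ s w) (ρ / 4 * Vzz ρ z w) z := by
  have hE : HasDerivAt (fun s => Real.exp (ρ / 4 * hfun s))
      (Real.exp (ρ / 4 * hfun z) * (ρ / 4 * 1)) z :=
    ((hasDerivAt_hfun hz).const_mul (ρ / 4)).exp
  have hP : HasDerivAt (fun s : ℝ => 1 + phi (s * w)) 0 z := by
    rcases hw with h | h
    · subst h
      simp only [mul_one]
      simpa using hasDerivAt_phi_pos hz
    · subst h
      have h1 : HasDerivAt (fun s : ℝ => s * (-1 : ℝ)) (-1) z := by
        simpa using (hasDerivAt_id z).mul_const (-1 : ℝ)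
      have h2 : HasDerivAt phi 0 (z * (-1 : ℝ)) := by
        apply hasDerivAt_phi_neg; nlinarith
      have := (hasDerivAt_const z (1:ℝ)).add (HasDerivAt.comp z h2 h1)
      simpa [Function.comp_def] using HasDerivAt.comp z h2 h1
  have := hE.fun_mul hP
  exact this.congr_deriv (by unfold Vzz; ring)

lemma hasDerivAt_Vzz_neg (ρ : ℝ) {w : ℝ} (hw : w = 1 ∨ w = -1) {z : ℝ} (hz : z ≤ -1) :
    HasDerivAt (fun s => Vzz ρ s w) (-(ρ / 4) * Vzz ρ z w) z := by
  have hw' : -w = 1 ∨ -w = -1 := by rcases hw with h | h <;> subst h <;> simp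
  have h := hasDerivAt_Vzz_pos ρ hw' (z := -z) (by linarith)
  have hn : HasDerivAt (fun s : ℝ => -s) (-1) z := hasDerivAt_neg z
  have h2 := HasDerivAt.comp z h hn
  have he : ((fun s => Vzz ρ s (-w)) ∘ fun s : ℝ => -s) = fun s => Vzz ρ s w := by
    funext s; simp only [Function.comp]; rw [Vzz_neg]
  rw [he] at h2
  exact h2.congr_deriv (by rw [Vzz_neg]; ring)

set_option maxHeartbeats 1000000 in
/-- Per-coordinate Lyapunov drift inequality for the Zig-Zag sampler with potential
`U(x) = W(x) + ∑_j U_j(x_j)`: for `|x_i| ≥ R`,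
`y_i ∂_z V_i(x_i, y_i) + (y_i ∂_{x_i} U(x))₊ (V_i(x_i,-y_i) - V_i(x_i,y_i))
  ≤ -(ρ/8) V_i(x_i,y_i)`. -/
theorem zigzag_lyapunov_drift (N : ℕ) (hN : 1 ≤ N) (ρ R : ℝ) (hρ : 0 < ρ) (hR : 1 ≤ R)
    (U : Fin N → ℝ → ℝ) (hU : ∀ i, ContDiff ℝ 1 (U i))
    (hUdrift : ∀ i z, R ≤ |z| → ρ * |z| ≤ z * deriv (U i) z)
    (W : (Fin N → ℝ) → ℝ) (hW : ContDiff ℝ 1 W)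
    (hWbdd : ∀ j x, |fderiv ℝ W x (Pi.single j 1)| ≤ ρ / 4)
    (x y : Fin N → ℝ) (hy : ∀ i, y i = 1 ∨ y i = -1)
    (i : Fin N) (hxi : R ≤ |x i|) :
    ∃ d : ℝ, HasDerivAt (fun z => Vzz ρ z (y i)) d (x i) ∧
      y i * d +
          max (y i * fderiv ℝ (fun v => W v + ∑ j, U j (v j)) x (Pi.single i 1)) 0 *
            (Vzz ρ (x i) (-(y i)) - Vzz ρ (x i) (y i)) ≤
        -(ρ / 8) * Vzz ρ (x i) (y i) := by
  set z := x i with hzdef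
  set w := y i with hwdef
  have hw : w = 1 ∨ w = -1 := hy i
  have hww : w * w = 1 := by rcases hw with h | h <;> rw [h] <;> norm_num
  have hwabs : |w| = 1 := by rcases hw with h | h <;> rw [h] <;> norm_num
  have hz1 : 1 ≤ |z| := le_trans hR hxi
  -- fderiv computation
  have hG : HasFDerivAt (fun v : Fin N → ℝ => ∑ j, U j (v j))
      (∑ j, deriv (U j) (x j) • (ContinuousLinearMap.proj j : (Fin N → ℝ) →L[ℝ] ℝ)) x := by
    apply HasFDerivAt.fun_sum
    intro j _
    have h1 : HasDerivAt (U j) (deriv (U j) (x j)) (x j) :=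
      ((hU j).differentiable one_ne_zero).differentiableAt.hasDerivAt
    exact h1.comp_hasFDerivAt x (hasFDerivAt_apply j x)
  have hWd : HasFDerivAt W (fderiv ℝ W x) x :=
    ((hW.differentiable one_ne_zero).differentiableAt).hasFDerivAt
  have hF : fderiv ℝ (fun v => W v + ∑ j, U j (v j)) x (Pi.single i 1)
      = fderiv ℝ W x (Pi.single i 1) + deriv (U i) (x i) := by
    rw [(hWd.fun_add hG).fderiv]
    simp only [ContinuousLinearMap.add_apply, ContinuousLinearMap.coe_sum',
      Finset.sum_apply, ContinuousLinearMap.coe_smul', Pi.smul_apply,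
      ContinuousLinearMap.proj_apply, smul_eq_mul]
    congr 1
    rw [Finset.sum_eq_single i]
    · rw [Pi.single_eq_same]; ring
    · intro j _ hj
      rw [Pi.single_eq_of_ne hj]; ring
    · intro h; exact absurd (Finset.mem_univ i) h
  set A := fderiv ℝ W x (Pi.single i 1) with hA
  set B := deriv (U i) (x i) with hB
  have hAbdd : |A| ≤ ρ / 4 := hWbdd i x
  have hwAabs : |w * A| ≤ ρ / 4 := by rw [abs_mul, hwabs, one_mul]; exact hAbdd
  have hwA : -(ρ / 4) ≤ w * A := (abs_le.mp hwAabs).1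
  have hwA2 : w * A ≤ ρ / 4 := (abs_le.mp hwAabs).2
  have hdrift : ρ * |z| ≤ z * B := hUdrift i z hxi
  have hzw : |z * w| = |z| := by rw [abs_mul, hwabs, mul_one]
  have hzw0 : z * w ≠ 0 := by
    intro h; rw [h, abs_zero] at hzw; linarith [hzw ▸ hz1]
  have hE := Real.exp_pos (ρ / 4 * hfun z)
  set E := Real.exp (ρ / 4 * hfun z) with hEdef
  rcases lt_or_gt_of_ne hzw0 with hneg | hpos
  · -- case z*w < 0 : z*w ≤ -1
    have habs : |z| = -(z * w) := by rw [← hzw]; exact abs_of_neg hneg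
    have hzwle : z * w ≤ -1 := by nlinarith [hz1, habs]
    have hV : Vzz ρ z w = E := by
      rw [Vzz, phi_of_le_neg hzwle]; ring
    have hVflip : Vzz ρ z (-w) = 2 * E := by
      rw [Vzz, show z * -w = -(z * w) by ring, phi_of_one_le (by linarith)]; ring
    have hwB : w * B ≤ -ρ := by
      have key : (w * B) * (-(z * w)) = -(z * B) := by
        have : (w * B) * (-(z * w)) = -(z * B) * (w * w) := by ring
        rw [this, hww, mul_one]
      have h1 : ρ * (-(z * w)) ≤ z * B := by rw [← habs]; exact hdrift
      have h2 : (0:ℝ) < -(z * w) := by linarith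
      nlinarith [key, h1, h2]
    -- derivative
    obtain ⟨d, hd, hwd⟩ : ∃ d, HasDerivAt (fun s => Vzz ρ s w) d z ∧
        w * d = -(ρ / 4) * Vzz ρ z w := by
      rcases hw with h | h
      · have hzle : z ≤ -1 := by rw [h, mul_one] at hzwle; exact hzwle
        exact ⟨_, hasDerivAt_Vzz_neg ρ (Or.inl h) hzle, by rw [h]; ring⟩
      · have hzge : 1 ≤ z := by nlinarith [hzwle, h]
        exact ⟨_, hasDerivAt_Vzz_pos ρ (Or.inr h) hzge, by rw [h]; ring⟩
    refine ⟨d, hd, ?_⟩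
    rw [hF]
    have hmax : max (w * (A + B)) 0 = 0 := max_eq_right (by
      have h' : w * (A + B) = w * A + w * B := by ring
      rw [h']; linarith [hwA2, hwB])
    rw [hmax, hwd, hV, hVflip]
    nlinarith [hE]
  · -- case z*w > 0 : 1 ≤ z*w
    have habs : |z| = z * w := by rw [← hzw]; exact abs_of_pos hpos
    have hzwge : 1 ≤ z * w := by rw [← habs]; exact hz1
    have hV : Vzz ρ z w = 2 * E := by
      rw [Vzz, phi_of_one_le hzwge]; ring
    have hVflip : Vzz ρ z (-w) = E := by
      rw [Vzz, show z * -w = -(z * w) by ring, phi_of_le_neg (by linarith)]; ring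
    have hwB : ρ ≤ w * B := by
      have key : (w * B) * (z * w) = z * B := by
        have : (w * B) * (z * w) = (z * B) * (w * w) := by ring
        rw [this, hww, mul_one]
      have h1 : ρ * (z * w) ≤ z * B := by rw [← habs]; exact hdrift
      nlinarith [key, h1, hzwge]
    obtain ⟨d, hd, hwd⟩ : ∃ d, HasDerivAt (fun s => Vzz ρ s w) d z ∧
        w * d = ρ / 4 * Vzz ρ z w := by
      rcases hw with h | h
      · have hzge : 1 ≤ z := by rw [h, mul_one] at hzwge; exact hzwge
        exact ⟨_, hasDerivAt_Vzz_pos ρ (Or.inl h) hzge, by rw [h]; ring⟩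
      · have hzle : z ≤ -1 := by nlinarith [hzwge, h]
        exact ⟨_, hasDerivAt_Vzz_neg ρ (Or.inr h) hzle, by rw [h]; ring⟩
    refine ⟨d, hd, ?_⟩
    rw [hF]
    have hmax : max (w * (A + B)) 0 = w * (A + B) := max_eq_left (by
      have h' : w * (A + B) = w * A + w * B := by ring
      rw [h']; linarith)
    rw [hmax, hwd, hV, hVflip]
    have hexp : w * (A + B) = w * A + w * B := by ring
    rw [hexp]
    nlinarith [hwA, hwB, hE]
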